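/- arXiv:2006.07788 — 3 statements merged into one kernel-verified Lean document; each statement's English description precedes it below -/
import Mathlib

section
/- Let ε₀ > 1 be a real number. There exists a natural number K such that the map k ↦ p(k) is monotone nondecreasing for k ≥ K: for all integers k₂ ≥ k₁ ≥ K, p(k₁) ≤ p(k₂). (This is the paper's Theorem 1: for windows with causalities, the probability P(F(k) > 1) that the naive window-level Granger F-statistic exceeds the threshold is monotone increasing in the window length k once k is sufficiently large.) -/
open MeasureTheory ProbabilityTheory

/-- `p ε₀ k` is the probability of the event `{(x, y) : x > y}` under the product of the
Gamma distribution with shape `k/2` and rate `1/(2ε₀)` (the law of the sum of squares of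
`k` i.i.d. centered Gaussians with variance `ε₀`) and the Gamma distribution with shape
`k/2` and rate `1/2` (the chi-square distribution with `k` degrees of freedom).
It is the probability that the window-level F-statistic of the naive DWGC method exceeds
the threshold `1` for a window of length `k` when the expected F-ratio is `ε₀`. -/
noncomputable def naiveDWGCDetectProb (ε₀ : ℝ) (k : ℕ) : ℝ :=
  (((gammaMeasure ((k : ℝ) / 2) (1 / (2 * ε₀))).prod
      (gammaMeasure ((k : ℝ) / 2) (1 / 2)))
    {q : ℝ × ℝ | q.1 > q.2}).toReal

open scoped ENNReal
open Real Set

section AuxiliaryLemmas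

lemma aux_lintegral_Ioi_comp_mul_left (f : ℝ → ℝ≥0∞) (hf : Measurable f) {c : ℝ} (hc : 0 < c)
    (s : ℝ) :
    ∫⁻ y in Ioi s, f y = ENNReal.ofReal c * ∫⁻ w in Ioi (s / c), f (c * w) := by
  have h1 : volume.restrict (Ioi s) =
      ENNReal.ofReal c • Measure.map (c * ·) (volume.restrict (Ioi (s / c))) := by
    conv_lhs => rw [← Real.smul_map_volume_mul_left (ne_of_gt hc)]
    rw [abs_of_pos hc, Measure.restrict_smul,
      Measure.restrict_map (measurable_const_mul c) measurableSet_Ioi,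
      preimage_const_mul_Ioi₀ _ hc]
  rw [h1, lintegral_smul_measure, lintegral_map hf (measurable_const_mul c), smul_eq_mul]

lemma aux_gamma_lintegral (b c : ℝ) (hb : 0 < b) (hc : 0 < c) :
    ∫⁻ x in Ioi 0, ENNReal.ofReal (x ^ (b - 1) * Real.exp (-(c * x))) =
      ENNReal.ofReal ((1 / c) ^ b * Real.Gamma b) := by
  rw [← integral_rpow_mul_exp_neg_mul_Ioi hb hc]
  rw [← ofReal_integral_eq_lintegral_ofReal]
  · have : IntegrableOn (fun x : ℝ => x ^ (b - 1) * Real.exp (-c * x ^ (1:ℝ))) (Ioi 0) :=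
      integrableOn_rpow_mul_exp_neg_mul_rpow (by linarith) one_pos hc
    refine this.congr_fun (fun x hx => ?_) measurableSet_Ioi
    dsimp only; rw [Real.rpow_one, neg_mul]
  · refine (ae_restrict_iff' measurableSet_Ioi).mpr (ae_of_all _ fun x hx => ?_)
    have : (0:ℝ) < x := hx
    positivity

@[fun_prop]
lemma measurable_gammaPDF' (a r : ℝ) : Measurable (gammaPDF a r) :=
  (measurable_gammaPDFReal a r).ennreal_ofReal

/-- the 1-d density appearing after reduction -/
noncomputable def Dd (r1 r2 a w : ℝ) : ℝ :=
  (r1 * r2) ^ a * Real.Gamma (2 * a) / Real.Gamma a ^ 2 *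
    (w ^ (a - 1) * (r1 + r2 * w) ^ (-(2 * a)))

lemma real_integrand_eq {a r1 r2 x w : ℝ} (hx : 0 < x) (hw : 0 < w) :
    gammaPDFReal a r1 x * x * gammaPDFReal a r2 (x * w) =
      r1 ^ a * r2 ^ a / Real.Gamma a ^ 2 * w ^ (a - 1) *
        (x ^ (2 * a - 1) * Real.exp (-((r1 + r2 * w) * x))) := by
  rw [gammaPDFReal, if_pos hx.le, gammaPDFReal, if_pos (by positivity : (0:ℝ) ≤ x * w),
    Real.mul_rpow hx.le hw.le,
    show (2 * a - 1) = (a - 1) + ((a - 1) + 1) by ring,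
    Real.rpow_add hx, Real.rpow_add hx, Real.rpow_one,
    show -((r1 + r2 * w) * x) = -(r1 * x) + -(r2 * (x * w)) by ring,
    Real.exp_add]
  ring

lemma inner_lintegral_eq {a r1 r2 w : ℝ} (ha : 0 < a) (hr1 : 0 < r1) (hr2 : 0 < r2)
    (hw : 0 < w) :
    ∫⁻ x in Ioi 0, gammaPDF a r1 x * ENNReal.ofReal x * gammaPDF a r2 (x * w) =
      ENNReal.ofReal (Dd r1 r2 a w) := by
  have hK : 0 ≤ r1 ^ a * r2 ^ a / Real.Gamma a ^ 2 * w ^ (a - 1) := by positivity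
  have hstep : ∀ x ∈ Ioi (0:ℝ),
      gammaPDF a r1 x * ENNReal.ofReal x * gammaPDF a r2 (x * w) =
        ENNReal.ofReal (r1 ^ a * r2 ^ a / Real.Gamma a ^ 2 * w ^ (a - 1)) *
          ENNReal.ofReal (x ^ (2 * a - 1) * Real.exp (-((r1 + r2 * w) * x))) := by
    intro x hx
    have hx : (0:ℝ) < x := hx
    rw [gammaPDF, gammaPDF, ← ENNReal.ofReal_mul (gammaPDFReal_nonneg ha hr1 x),
      ← ENNReal.ofReal_mul (mul_nonneg (gammaPDFReal_nonneg ha hr1 x) hx.le), ← ENNReal.ofReal_mul hK,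
      real_integrand_eq hx hw]
  rw [setLIntegral_congr_fun_ae measurableSet_Ioi (ae_of_all _ hstep),
    lintegral_const_mul _ (by fun_prop),
    show 2 * a - 1 = 2 * a - 1 from rfl]
  have h2a : (0:ℝ) < 2 * a := by linarith
  have hc : (0:ℝ) < r1 + r2 * w := by positivity
  rw [show (2 * a - 1 : ℝ) = (2 * a) - 1 by ring, aux_gamma_lintegral (2 * a) _ h2a hc,
    ← ENNReal.ofReal_mul hK]
  congr 1
  rw [Dd, one_div, Real.inv_rpow hc.le, ← Real.rpow_neg hc.le,
    Real.mul_rpow hr1.le hr2.le]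
  ring

lemma qE_eq {a r1 r2 : ℝ} (ha : 0 < a) (hr1 : 0 < r1) (hr2 : 0 < r2) :
    ((gammaMeasure a r1).prod (gammaMeasure a r2)) {q : ℝ × ℝ | q.1 ≤ q.2} =
      ∫⁻ w in Ioi 1, ENNReal.ofReal (Dd r1 r2 a w) := by
  haveI := isProbabilityMeasure_gammaMeasure ha hr1
  haveI := isProbabilityMeasure_gammaMeasure ha hr2
  have hS : MeasurableSet {q : ℝ × ℝ | q.1 ≤ q.2} :=
    measurableSet_le measurable_fst measurable_snd
  have hanti : Measurable fun x : ℝ => gammaMeasure a r2 (Ici x) :=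
    Antitone.measurable (fun s t hst => measure_mono (Ici_subset_Ici.mpr hst))
  rw [Measure.prod_apply hS]
  have hpre : ∀ x : ℝ, (Prod.mk x ⁻¹' {q : ℝ × ℝ | q.1 ≤ q.2}) = Ici x := by
    intro x; ext y; simp [mem_Ici]
  simp_rw [hpre]
  rw [show gammaMeasure a r1 = volume.withDensity (gammaPDF a r1) from rfl,
    lintegral_withDensity_eq_lintegral_mul _ (measurable_gammaPDF' a r1) hanti]
  -- restrict outer integral to Ioi 0
  have h0 : ∫⁻ x, (gammaPDF a r1 * fun x => gammaMeasure a r2 (Ici x)) x =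
      ∫⁻ x in Ioi 0, gammaPDF a r1 x * gammaMeasure a r2 (Ici x) := by
    rw [← lintegral_add_compl _ measurableSet_Ici (μ := volume), compl_Ici,
      restrict_Ioi_eq_restrict_Ici]
    have hzero : ∫⁻ x in Iio 0, (gammaPDF a r1 * fun x => gammaMeasure a r2 (Ici x)) x = 0 := by
      rw [setLIntegral_congr_fun_ae (g := fun _ => 0) measurableSet_Iio]
      · simp
      · exact ae_of_all _ fun x (hx : x < 0) => by
          simp [Pi.mul_apply, gammaPDF_of_neg hx]
    rw [hzero, add_zero]
    rfl
  rw [h0]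
  -- pointwise rewrite inner measure as lintegral and substitute y = x * w
  have hsub : ∀ x ∈ Ioi (0:ℝ),
      gammaPDF a r1 x * gammaMeasure a r2 (Ici x) =
        ∫⁻ w in Ioi 1, gammaPDF a r1 x * ENNReal.ofReal x * gammaPDF a r2 (x * w) := by
    intro x hx
    have hx : (0:ℝ) < x := hx
    rw [show gammaMeasure a r2 = volume.withDensity (gammaPDF a r2) from rfl,
      withDensity_apply _ measurableSet_Ici, ← restrict_Ioi_eq_restrict_Ici,
      aux_lintegral_Ioi_comp_mul_left _ (measurable_gammaPDF' a r2) hx x,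
      div_self hx.ne']
    rw [← lintegral_const_mul _ (show Measurable fun w => gammaPDF a r2 (x * w) from
        (measurable_gammaPDF' a r2).comp (measurable_const_mul x)),
      ← lintegral_const_mul _ (show Measurable fun w => ENNReal.ofReal x * gammaPDF a r2 (x * w) from
        ((measurable_gammaPDF' a r2).comp (measurable_const_mul x)).const_mul _)]
    congr 1 with w
    ring
  rw [setLIntegral_congr_fun_ae measurableSet_Ioi (ae_of_all _ hsub)]
  rw [lintegral_lintegral_swap (Measurable.aemeasurable (by
    refine (((measurable_gammaPDF' a r1).comp measurable_fst).mul
      (ENNReal.measurable_ofReal.comp measurable_fst)).mul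
      ((measurable_gammaPDF' a r2).comp (measurable_fst.mul measurable_snd))))]
  exact setLIntegral_congr_fun_ae measurableSet_Ioi (ae_of_all _
    fun w (hw : 1 < w) => inner_lintegral_eq ha hr1 hr2 (by linarith))

lemma gamma_sq_le {a : ℝ} (ha : 1/2 < a) :
    Real.Gamma a ^ 2 * (a - 1/2) ≤ Real.Gamma (a + 1/2) ^ 2 := by
  have h1 : 0 < a - 1/2 := by linarith
  have h2 : Real.Gamma (a + 1/2) = (a - 1/2) * Real.Gamma (a - 1/2) := by
    have := Real.Gamma_add_one (show a - (1:ℝ)/2 ≠ 0 by linarith)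
    rw [show a - (1:ℝ)/2 + 1 = a + 1/2 by ring] at this
    exact this
  have hGm := Real.Gamma_pos_of_pos h1
  have hGp := Real.Gamma_pos_of_pos (show (0:ℝ) < a + 1/2 by linarith)
  have hGa := Real.Gamma_pos_of_pos (show (0:ℝ) < a by linarith)
  -- log-convexity at midpoint
  have hc := Real.convexOn_log_Gamma.2 (mem_Ioi.mpr h1)
    (mem_Ioi.mpr (show (0:ℝ) < a + 1/2 by linarith))
    (by norm_num : (0:ℝ) ≤ 1/2) (by norm_num : (0:ℝ) ≤ 1/2) (by norm_num)
  simp only [Function.comp_apply, smul_eq_mul] at hc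
  rw [show (1:ℝ)/2 * (a - 1/2) + 1/2 * (a + 1/2) = a by ring] at hc
  have hsq : Real.Gamma a ^ 2 ≤ Real.Gamma (a - 1/2) * Real.Gamma (a + 1/2) := by
    have hlog : Real.log (Real.Gamma a ^ 2) ≤
        Real.log (Real.Gamma (a - 1/2) * Real.Gamma (a + 1/2)) := by
      rw [Real.log_pow, Real.log_mul hGm.ne' hGp.ne']
      push_cast
      linarith
    exact (Real.log_le_log_iff (by positivity) (by positivity)).mp hlog
  nlinarith [hsq, h2, hGm, hGp]

lemma Dd_succ_eq {r1 r2 a w : ℝ} (hr1 : 0 < r1) (hr2 : 0 < r2) (ha : 0 < a) (hw : 0 < w) :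
    Dd r1 r2 (a + 1/2) w =
      2 * a * Real.Gamma a ^ 2 / Real.Gamma (a + 1/2) ^ 2 *
        ((r1 * r2) ^ ((1:ℝ)/2) * w ^ ((1:ℝ)/2) / (r1 + r2 * w)) * Dd r1 r2 a w := by
  have hc : 0 < r1 + r2 * w := by positivity
  have hGa := Real.Gamma_pos_of_pos ha
  have hGa2 := Real.Gamma_pos_of_pos (show (0:ℝ) < a + 1/2 by linarith)
  have hG2 : Real.Gamma (2 * (a + 1/2)) = 2 * a * Real.Gamma (2 * a) := by
    rw [show 2 * (a + 1/2) = 2 * a + 1 by ring, Real.Gamma_add_one (by positivity)]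
  unfold Dd
  rw [hG2, show a + 1/2 - 1 = a - 1 + 1/2 by ring, Real.rpow_add hw,
    Real.rpow_add (by positivity : (0:ℝ) < r1 * r2),
    show -(2 * (a + 1/2)) = -(2 * a) + -1 by ring,
    Real.rpow_add hc, Real.rpow_neg_one]
  field_simp

lemma Dd_nonneg {r1 r2 a w : ℝ} (hr1 : 0 < r1) (hr2 : 0 < r2) (ha : 0 < a) (hw : 0 < w) :
    0 ≤ Dd r1 r2 a w := by
  have hGa := Real.Gamma_pos_of_pos ha
  have hG2a := Real.Gamma_pos_of_pos (show (0:ℝ) < 2 * a by linarith)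
  unfold Dd
  positivity

set_option maxHeartbeats 1000000 in
lemma Dd_step {ε₀ a w : ℝ} (hε : 1 < ε₀) (ha : 1/2 < a)
    (hcond : 2 * a * Real.sqrt ε₀ ≤ (a - 1/2) * (1 + ε₀)) (hw : 1 ≤ w) :
    Dd (1/(2*ε₀)) (1/2) (a + 1/2) w ≤ Dd (1/(2*ε₀)) (1/2) a w := by
  have hε0 : (0:ℝ) < ε₀ := by linarith
  have hr1 : (0:ℝ) < 1/(2*ε₀) := by positivity
  have hr2 : (0:ℝ) < (1/2 : ℝ) := by norm_num
  have ha0 : (0:ℝ) < a := by linarith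
  have hw0 : (0:ℝ) < w := by linarith
  set s := Real.sqrt ε₀ with hs
  have hs0 : 0 < s := Real.sqrt_pos.mpr hε0
  have hs1 : 1 < s := by
    rw [hs, show (1:ℝ) = Real.sqrt 1 by simp]
    exact Real.sqrt_lt_sqrt (by norm_num) hε
  have hs2 : s ^ 2 = ε₀ := Real.sq_sqrt hε0.le
  set t := w ^ ((1:ℝ)/2) with ht
  have ht1 : 1 ≤ t := Real.one_le_rpow hw (by norm_num)
  have htt : t * t = w := by
    rw [ht, ← Real.rpow_add hw0]
    norm_num
  have hGa := Real.Gamma_pos_of_pos ha0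
  have hGa2 := Real.Gamma_pos_of_pos (show (0:ℝ) < a + 1/2 by linarith)
  have hc : (0:ℝ) < 1/(2*ε₀) + 1/2 * w := by positivity
  rw [Dd_succ_eq hr1 hr2 ha0 hw0]
  refine mul_le_of_le_one_left (Dd_nonneg hr1 hr2 ha0 hw0) ?_
  have hrr : (1/(2*ε₀) * (1/2) : ℝ) ^ ((1:ℝ)/2) = 1/(2*s) := by
    rw [← Real.sqrt_eq_rpow, show (1/(2*ε₀) * (1/2) : ℝ) = (1/(2*s))^2 by
      rw [div_pow]; rw [mul_pow]; rw [hs2]; norm_num; ring]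
    exact Real.sqrt_sq (by positivity)
  rw [hrr]
  -- bound the two factors
  have hA : 2 * a * Real.Gamma a ^ 2 / Real.Gamma (a + 1/2) ^ 2 ≤ 2 * a / (a - 1/2) := by
    rw [div_le_div_iff₀ (by positivity) (by linarith)]
    nlinarith [gamma_sq_le ha, ha0]
  have hB : 1/(2*s) * t / (1/(2*ε₀) + 1/2 * w) ≤ s / (1 + ε₀) := by
    have hεt : 1 ≤ ε₀ * t := by nlinarith
    have key2 : (1+ε₀) * t ≤ 1 + ε₀ * w := by
      nlinarith [mul_nonneg (sub_nonneg.mpr ht1) (sub_nonneg.mpr hεt), htt]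
    have hss : s * s = ε₀ := by nlinarith [hs2]
    rw [div_le_div_iff₀ hc (by linarith : (0:ℝ) < 1 + ε₀),
      show 1/(2*s) * t * (1 + ε₀) = t*(1+ε₀)/(2*s) from by ring,
      div_le_iff₀ (by positivity : (0:ℝ) < 2*s),
      show s * (1/(2*ε₀) + 1/2*w) * (2*s) = (s*s) * (1/ε₀ + w) from by ring, hss,
      (by field_simp : ε₀ * (1/ε₀ + w) = 1 + ε₀*w)]
    linarith [key2]
  have hBnn : 0 ≤ 1/(2*s) * t / (1/(2*ε₀) + 1/2 * w) :=
    div_nonneg (mul_nonneg (one_div_nonneg.mpr (by linarith)) (by linarith)) hc.le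
  have hACnn : (0:ℝ) ≤ 2*a/(a-1/2) := div_nonneg (by linarith) (by linarith)
  calc 2 * a * Real.Gamma a ^ 2 / Real.Gamma (a + 1/2) ^ 2 *
        (1/(2*s) * t / (1/(2*ε₀) + 1/2 * w))
      ≤ 2 * a / (a - 1/2) * (s / (1 + ε₀)) := mul_le_mul hA hB hBnn hACnn
    _ ≤ 1 := by
        rw [div_mul_div_comm, div_le_one (by nlinarith : (0:ℝ) < (a-1/2)*(1+ε₀))]
        linarith [hcond]

end AuxiliaryLemmas

lemma prob_eq_one_sub {ε₀ : ℝ} (hε₀ : 1 < ε₀) {k : ℕ} (hk : 1 ≤ k) :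
    naiveDWGCDetectProb ε₀ k =
      (1 - ∫⁻ w in Ioi 1, ENNReal.ofReal (Dd (1/(2*ε₀)) (1/2) ((k:ℝ)/2) w)).toReal := by
  have hε0 : (0:ℝ) < ε₀ := by linarith
  have hk1 : (1:ℝ) ≤ (k:ℝ) := by exact_mod_cast hk
  have ha : (0:ℝ) < (k:ℝ)/2 := by linarith
  have hr1 : (0:ℝ) < 1/(2*ε₀) := by positivity
  have hr2 : (0:ℝ) < (1/2:ℝ) := by norm_num
  haveI := isProbabilityMeasure_gammaMeasure ha hr1
  haveI := isProbabilityMeasure_gammaMeasure ha hr2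
  have hS : MeasurableSet {q : ℝ × ℝ | q.1 ≤ q.2} :=
    measurableSet_le measurable_fst measurable_snd
  rw [naiveDWGCDetectProb,
    show {q : ℝ × ℝ | q.1 > q.2} = {q : ℝ × ℝ | q.1 ≤ q.2}ᶜ from by
      ext q; simp [Set.mem_compl_iff, Set.mem_setOf_eq, not_le, gt_iff_lt],
    prob_compl_eq_one_sub hS, qE_eq ha hr1 hr2]

/-- **Theorem 1 of the paper.** For windows with causalities (expected F-ratio `ε₀ > 1`),
the probability that the naive window-level Granger F-statistic exceeds the threshold is
monotone nondecreasing in the window length `k`, once `k` is sufficiently large. -/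
theorem naiveDWGCDetectProb_eventually_monotone (ε₀ : ℝ) (hε₀ : 1 < ε₀) :
    ∃ K : ℕ, ∀ k₁ k₂ : ℕ, K ≤ k₁ → k₁ ≤ k₂ →
      naiveDWGCDetectProb ε₀ k₁ ≤ naiveDWGCDetectProb ε₀ k₂ := by
  have hε0 : (0:ℝ) < ε₀ := by linarith
  set s := Real.sqrt ε₀ with hsdef
  have hs1 : 1 < s := by
    rw [hsdef, show (1:ℝ) = Real.sqrt 1 by simp]
    exact Real.sqrt_lt_sqrt (by norm_num) hε₀
  have hs2 : s ^ 2 = ε₀ := Real.sq_sqrt hε0.le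
  refine ⟨max 2 ⌈(1 + ε₀) / (s - 1)^2⌉₊, ?_⟩
  have hstep : ∀ k : ℕ, max 2 ⌈(1 + ε₀) / (s - 1)^2⌉₊ ≤ k →
      naiveDWGCDetectProb ε₀ k ≤ naiveDWGCDetectProb ε₀ (k + 1) := by
    intro k hk
    have hk2 : 2 ≤ k := le_trans (le_max_left _ _) hk
    have hkc : ⌈(1 + ε₀) / (s - 1)^2⌉₊ ≤ k := le_trans (le_max_right _ _) hk
    have hkr : (1 + ε₀) / (s - 1)^2 ≤ (k:ℝ) := by
      calc (1 + ε₀) / (s - 1)^2 ≤ (⌈(1 + ε₀) / (s - 1)^2⌉₊ : ℝ) := Nat.le_ceil _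
        _ ≤ (k:ℝ) := by exact_mod_cast hkc
    have hks : (1 + ε₀) ≤ (k:ℝ) * (s - 1)^2 := by
      rw [div_le_iff₀ (by nlinarith : (0:ℝ) < (s - 1)^2)] at hkr
      linarith
    have hk2r : (2:ℝ) ≤ (k:ℝ) := by exact_mod_cast hk2
    have ha : (1:ℝ)/2 < (k:ℝ)/2 := by linarith
    have hcond : 2 * ((k:ℝ)/2) * Real.sqrt ε₀ ≤ ((k:ℝ)/2 - 1/2) * (1 + ε₀) := by
      rw [← hsdef]
      have hexp : (k:ℝ) * (s - 1)^2 = (k:ℝ) * (1 + ε₀) - 2 * (k:ℝ) * s := by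
        rw [← hs2]; ring
      rw [hexp] at hks
      linarith
    -- probabilities
    rw [prob_eq_one_sub hε₀ (by omega : 1 ≤ k),
      prob_eq_one_sub hε₀ (by omega : 1 ≤ k + 1)]
    have hcast : ((k + 1 : ℕ) : ℝ)/2 = (k:ℝ)/2 + 1/2 := by push_cast; ring
    rw [hcast]
    have hmono : (∫⁻ w in Ioi 1, ENNReal.ofReal (Dd (1/(2*ε₀)) (1/2) ((k:ℝ)/2 + 1/2) w)) ≤
        ∫⁻ w in Ioi 1, ENNReal.ofReal (Dd (1/(2*ε₀)) (1/2) ((k:ℝ)/2) w) :=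
      setLIntegral_mono' measurableSet_Ioi fun w hw =>
        ENNReal.ofReal_le_ofReal (Dd_step hε₀ ha hcond (le_of_lt hw))
    refine ENNReal.toReal_mono ?_ (tsub_le_tsub_left hmono 1)
    exact ne_top_of_le_ne_top ENNReal.one_ne_top tsub_le_self
  intro k₁ k₂ hK hle
  induction k₂, hle using Nat.le_induction with
  | base => exact le_refl _
  | succ n hn ih => exact le_trans ih (hstep n (le_trans hK hn))
end

section
/- Let ε₀ > 1 be a real number. For every positive integer k, p(k) = 1 − ∑_{m=0}^∞ Γ(k+m) · (1/ε₀)^{k/2+m} / ((1/ε₀ + 1)^{k+m} · Γ(k/2) · Γ(k/2+m+1)), where Γ is the real Gamma function and the series on the right-hand side converges. -/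
open MeasureTheory ProbabilityTheory

namespace NaiveDWGCAux
open Real Set


lemma exp_tsum (z : ℝ) : Real.exp z = ∑' n : ℕ, z ^ n / n.factorial := by
  rw [Real.exp_eq_exp_ℝ, NormedSpace.exp_eq_tsum_div]

lemma integrableOn_aux {s b : ℝ} (hs : -1 < s) (hb : 0 < b) :
    IntegrableOn (fun x : ℝ => x ^ s * Real.exp (-(b * x))) (Ioi 0) := by
  have h := integrableOn_rpow_mul_exp_neg_mul_rpow hs zero_lt_one hb
  refine h.congr_fun (fun x hx => ?_) measurableSet_Ioi
  simp only [Real.rpow_one, neg_mul]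

lemma lintegral_aux {A R : ℝ} (hA : 0 < A) (hR : 0 < R) :
    ∫⁻ x in Ioi (0:ℝ), ENNReal.ofReal (x ^ (A - 1) * Real.exp (-(R * x))) =
      ENNReal.ofReal ((1 / R) ^ A * Real.Gamma A) := by
  rw [← ofReal_integral_eq_lintegral_ofReal (integrableOn_aux (by linarith) hR) ?_,
    integral_rpow_mul_exp_neg_mul_Ioi hA hR]
  filter_upwards [ae_restrict_mem measurableSet_Ioi] with x hx
  exact mul_nonneg (Real.rpow_nonneg (le_of_lt hx) _) (Real.exp_pos _).le

lemma integrableOn_beta {c : ℝ} (hc : 0 < c) (n : ℕ) (y : ℝ) :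
    IntegrableOn (fun x : ℝ => x ^ (c - 1) * (y - x) ^ n) (Ioc 0 y) := by
  rcases le_or_gt y 0 with hy | hy
  · rw [Set.Ioc_eq_empty (by exact fun h => absurd (h.trans_le hy) (lt_irrefl 0))]
    exact integrableOn_empty
  · rw [← integrableOn_Icc_iff_integrableOn_Ioc]
    refine IntegrableOn.mul_continuousOn ?_ ?_ isCompact_Icc
    · exact (intervalIntegrable_iff_integrableOn_Icc_of_le hy.le).mp
        (intervalIntegral.intervalIntegrable_rpow' (by linarith))
    · exact (continuous_const.sub continuous_id).pow n |>.continuousOn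


lemma integral_beta {y : ℝ} (hy : 0 ≤ y) :
    ∀ (n : ℕ) {c : ℝ}, 0 < c →
    ∫ x in Ioc (0:ℝ) y, x ^ (c - 1) * (y - x) ^ n
      = y ^ (c + n) * (n.factorial * Real.Gamma c / Real.Gamma (c + n + 1)) := by
  intro n
  induction n with
  | zero =>
    intro c hc
    simp only [pow_zero, mul_one, Nat.cast_zero, add_zero, Nat.factorial_zero, Nat.cast_one,
      one_mul]
    rw [← intervalIntegral.integral_of_le hy, integral_rpow (Or.inl (by linarith)),
      sub_add_cancel, Real.zero_rpow hc.ne', Real.Gamma_add_one hc.ne']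
    rw [sub_zero]
    field_simp [(Real.Gamma_pos_of_pos hc).ne']
  | succ n ih =>
    intro c hc
    rcases eq_or_lt_of_le hy with rfl | hy'
    · rw [Set.Ioc_self, Measure.restrict_empty, integral_zero_measure,
        Real.zero_rpow (by positivity), zero_mul]
    have key : ∀ x ∈ Ioc (0:ℝ) y,
        x ^ (c - 1) * (y - x) ^ (n + 1)
          = y * (x ^ (c - 1) * (y - x) ^ n) - x ^ ((c + 1) - 1) * (y - x) ^ n := by
      intro x hx
      have hx0 : (0:ℝ) < x := hx.1
      have hxc : x ^ ((c + 1) - 1) = x ^ (c - 1) * x := by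
        rw [show (c + 1) - 1 = (c - 1) + 1 by ring, Real.rpow_add_one hx0.ne']
      rw [hxc, pow_succ]
      ring
    rw [setIntegral_congr_fun measurableSet_Ioc key, integral_sub
      ((integrableOn_beta hc n y).const_mul y) (integrableOn_beta (by linarith) n y),
      MeasureTheory.integral_const_mul, ih hc, ih (by linarith : (0:ℝ) < c + 1)]
    have h1 : y * y ^ (c + (n:ℝ)) = y ^ (c + ((n:ℕ)+1:ℕ)) := by
      push_cast
      rw [show c + ((n:ℝ) + 1) = (c + n) + 1 by ring, Real.rpow_add_one (by positivity), mul_comm]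
    have h2 : y ^ ((c+1) + (n:ℝ)) = y ^ (c + ((n:ℕ)+1:ℕ)) := by
      push_cast; ring_nf
    rw [← mul_assoc, h1, h2, ← mul_sub]
    congr 1
    have hΓ : Real.Gamma (c + n + 1) ≠ 0 := (Real.Gamma_pos_of_pos (by positivity)).ne'
    have hc1 : Real.Gamma (c + 1) = c * Real.Gamma c := Real.Gamma_add_one hc.ne'
    have e1 : Real.Gamma (c + 1 + (n:ℝ) + 1) = (c + n + 1) * Real.Gamma (c + n + 1) := by
      rw [show c + 1 + (n:ℝ) + 1 = (c + (n:ℝ) + 1) + 1 by ring,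
        Real.Gamma_add_one (by positivity)]
    have e2 : Real.Gamma (c + ((n:ℕ)+1:ℕ) + 1) = (c + n + 1) * Real.Gamma (c + n + 1) := by
      push_cast
      rw [show c + ((n:ℝ) + 1) + 1 = (c + (n:ℝ) + 1) + 1 by ring,
        Real.Gamma_add_one (by positivity)]
    rw [e1, e2, hc1, Nat.factorial_succ]
    push_cast
    field_simp
    ring


/-- Term of the incomplete-gamma series. -/
noncomputable def G (r c : ℝ) (n : ℕ) (y : ℝ) : ℝ :=
  if 0 ≤ y then r ^ (c + n) * y ^ (c + n) * Real.exp (-(r * y)) / Real.Gamma (c + n + 1) else 0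

lemma lintegral_gammaPDF_Iic {c r : ℝ} (hc : 0 < c) (hr : 0 < r) (y : ℝ) :
    ∫⁻ x in Iic y, gammaPDF c r x = ∑' n : ℕ, ENNReal.ofReal (G r c n y) := by
  rcases lt_or_ge y 0 with hy | hy
  · have h0 : ∫⁻ x in Iic y, gammaPDF c r x = 0 := by
      refine le_antisymm ?_ (by simp)
      calc ∫⁻ x in Iic y, gammaPDF c r x ≤ ∫⁻ x in Iio 0, gammaPDF c r x :=
            lintegral_mono_set (fun x hx => lt_of_le_of_lt hx hy)
        _ = 0 := lintegral_gammaPDF_of_nonpos le_rfl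
    simp [h0, G, not_le.mpr hy]
  · set K : ℕ → ℝ := fun n =>
      r ^ c / Real.Gamma c * Real.exp (-(r * y)) * r ^ n / n.factorial with hK
    have hΓc : (0:ℝ) < Real.Gamma c := Real.Gamma_pos_of_pos hc
    -- reduce to Ioc 0 y
    have hIic0 : ∫⁻ x in Iic (0:ℝ), gammaPDF c r x = 0 := by
      rw [← setLIntegral_congr (Iio_ae_eq_Iic (a := (0:ℝ)))]
      exact lintegral_gammaPDF_of_nonpos le_rfl
    rw [← Set.Iic_union_Ioc_eq_Iic hy, lintegral_union measurableSet_Ioc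
      (Set.Iic_disjoint_Ioc le_rfl), hIic0, zero_add]
    -- pointwise series expansion
    have hpt : ∀ x ∈ Ioc (0:ℝ) y, gammaPDF c r x
        = ∑' n : ℕ, ENNReal.ofReal (K n * (x ^ (c - 1) * (y - x) ^ n)) := by
      intro x hx
      have hx0 : (0:ℝ) < x := hx.1
      have hyx : (0:ℝ) ≤ y - x := sub_nonneg.mpr hx.2
      have hterm : ∀ n : ℕ, K n * (x ^ (c - 1) * (y - x) ^ n)
          = (r ^ c / Real.Gamma c * Real.exp (-(r * y)) * x ^ (c - 1))
            * ((r * (y - x)) ^ n / n.factorial) := by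
        intro n
        rw [mul_pow, hK]
        field_simp
      have hnn : ∀ n : ℕ, 0 ≤ K n * (x ^ (c - 1) * (y - x) ^ n) := by
        intro n
        rw [hterm]
        have : (0:ℝ) ≤ r * (y - x) := mul_nonneg hr.le hyx
        positivity
      have hsum : Summable (fun n : ℕ => K n * (x ^ (c - 1) * (y - x) ^ n)) := by
        refine Summable.congr ((Real.summable_pow_div_factorial (r * (y - x))).mul_left
          (r ^ c / Real.Gamma c * Real.exp (-(r * y)) * x ^ (c - 1))) ?_
        intro n
        rw [hterm]
      rw [gammaPDF_of_nonneg hx0.le, ← ENNReal.ofReal_tsum_of_nonneg hnn hsum]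
      congr 1
      have hexp : Real.exp (-(r * y)) * Real.exp (r * (y - x)) = Real.exp (-(r * x)) := by
        rw [← Real.exp_add]; congr 1; ring
      rw [tsum_congr hterm, tsum_mul_left, ← exp_tsum, ← hexp]
      ring
    rw [setLIntegral_congr_fun measurableSet_Ioc hpt]
    rw [lintegral_tsum (f := fun n x => ENNReal.ofReal (K n * (x ^ (c - 1) * (y - x) ^ n)))
      (fun n => (((measurable_id'.pow_const (c-1)).mul
        ((measurable_const.sub measurable_id').pow_const n)).const_mul
        (K n)).ennreal_ofReal.aemeasurable)]
    refine tsum_congr (fun n => ?_)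
    have hnn' : 0 ≤ᵐ[volume.restrict (Ioc 0 y)]
        (fun x => K n * (x ^ (c - 1) * (y - x) ^ n)) := by
      filter_upwards [ae_restrict_mem measurableSet_Ioc] with x hx
      have hK0 : 0 ≤ K n := by positivity
      exact mul_nonneg hK0 (mul_nonneg (Real.rpow_nonneg hx.1.le _)
        (pow_nonneg (sub_nonneg.mpr hx.2) n))
    rw [← ofReal_integral_eq_lintegral_ofReal ((integrableOn_beta hc n y).const_mul (K n)) hnn',
      MeasureTheory.integral_const_mul, integral_beta hy n hc]
    congr 1
    have hrn : r ^ (c + (n:ℝ)) = r ^ c * r ^ n := by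
      rw [Real.rpow_add hr, Real.rpow_natCast]
    have hΓ1 : Real.Gamma (c + n + 1) ≠ 0 := (Real.Gamma_pos_of_pos (by positivity)).ne'
    have hfa : (n.factorial : ℝ) ≠ 0 := Nat.cast_ne_zero.mpr n.factorial_ne_zero
    rw [G, if_pos hy, hK, hrn]
    field_simp
lemma measurable_G (r c : ℝ) (n : ℕ) : Measurable (G r c n) := by
  unfold G
  refine Measurable.ite measurableSet_Ici ?_ measurable_const
  exact ((measurable_const.mul (measurable_id'.pow_const _)).mul
    (Real.measurable_exp.comp (measurable_id'.const_mul r).neg)).div_const _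

lemma key (ε₀ : ℝ) (hε₀ : 1 < ε₀) (k : ℕ) (hk : 0 < k) :
    ((gammaMeasure ((k : ℝ) / 2) (1 / (2 * ε₀))).prod (gammaMeasure ((k : ℝ) / 2) (1 / 2)))
      {q : ℝ × ℝ | q.1 ≤ q.2}
    = ∑' m : ℕ, ENNReal.ofReal
        (Real.Gamma ((k : ℝ) + m) * (1 / ε₀) ^ ((k : ℝ) / 2 + m) /
          ((1 / ε₀ + 1) ^ ((k : ℝ) + m) * Real.Gamma ((k : ℝ) / 2) *
            Real.Gamma ((k : ℝ) / 2 + m + 1))) := by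
  have hε : (0:ℝ) < ε₀ := by linarith
  have hkR : (0:ℝ) < k := Nat.cast_pos.mpr hk
  set a : ℝ := 1 / ε₀ with hadef
  have ha : 0 < a := by positivity
  have ha1 : 0 < a + 1 := by linarith
  set c : ℝ := (k : ℝ) / 2 with hcdef
  have hc : 0 < c := by positivity
  set r : ℝ := 1 / (2 * ε₀) with hrdef
  set s : ℝ := (1:ℝ) / 2 with hsdef
  have hr : 0 < r := by positivity
  have hs : 0 < s := by norm_num
  have hΓc : (0:ℝ) < Real.Gamma c := Real.Gamma_pos_of_pos hc
  have hmeas : MeasurableSet {q : ℝ × ℝ | q.1 ≤ q.2} :=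
    measurableSet_le measurable_fst measurable_snd
  haveI := isProbabilityMeasure_gammaMeasure hc hs
  haveI := isProbabilityMeasure_gammaMeasure hc hr
  rw [Measure.prod_apply_symm hmeas]
  have hpre : ∀ y : ℝ, ((fun x => (x, y)) ⁻¹' {q : ℝ × ℝ | q.1 ≤ q.2}) = Iic y := fun y => rfl
  simp_rw [hpre]
  have hμIic : ∀ y : ℝ, gammaMeasure c r (Iic y) = ∑' n : ℕ, ENNReal.ofReal (G r c n y) := by
    intro y
    rw [gammaMeasure, withDensity_apply _ measurableSet_Iic, lintegral_gammaPDF_Iic hc hr y]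
  simp_rw [hμIic]
  have hpdfm : Measurable (gammaPDF c s) := (measurable_gammaPDFReal c s).ennreal_ofReal
  rw [gammaMeasure, lintegral_withDensity_eq_lintegral_mul _ hpdfm
    (Measurable.ennreal_tsum (fun n => (measurable_G r c n).ennreal_ofReal))]
  simp only [Pi.mul_apply]
  simp_rw [← ENNReal.tsum_mul_left]
  rw [lintegral_tsum (f := fun n a => gammaPDF c s a * ENNReal.ofReal (G r c n a))
    (fun n => (hpdfm.mul (measurable_G r c n).ennreal_ofReal).aemeasurable)]
  refine tsum_congr (fun n => ?_)
  have hΓcn1 : (0:ℝ) < Real.Gamma (c + n + 1) := Real.Gamma_pos_of_pos (by positivity)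
  set Cn : ℝ := s ^ c * r ^ (c + (n:ℝ)) / (Real.Gamma c * Real.Gamma (c + n + 1)) with hCndef
  have hCn : 0 < Cn := by positivity
  have hA : (0:ℝ) < c + (c + n) := by positivity
  have hR : (0:ℝ) < r + s := by positivity
  -- kill the part on `Iic 0`
  have hcompl : ∫⁻ y in Iic (0:ℝ), gammaPDF c s y * ENNReal.ofReal (G r c n y) = 0 := by
    rw [← setLIntegral_congr (Iio_ae_eq_Iic (a := (0:ℝ)))]
    rw [setLIntegral_congr_fun measurableSet_Iio (fun y (hy : y < 0) => ?_),
      lintegral_zero]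
    rw [G, if_neg (not_le.mpr hy), ENNReal.ofReal_zero, mul_zero]
  rw [← lintegral_add_compl (fun y => gammaPDF c s y * ENNReal.ofReal (G r c n y))
    measurableSet_Ioi (μ := volume), compl_Ioi, hcompl, add_zero]
  -- pointwise identity on `Ioi 0`
  have hptw : ∀ y ∈ Ioi (0:ℝ), gammaPDF c s y * ENNReal.ofReal (G r c n y)
      = ENNReal.ofReal (Cn * (y ^ (c + (c + n) - 1) * Real.exp (-((r + s) * y)))) := by
    intro y hy
    have hy0 : (0:ℝ) < y := hy
    rw [gammaPDF_of_nonneg hy0.le, G, if_pos hy0.le, ← ENNReal.ofReal_mul (by positivity)]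
    congr 1
    have h1 : y ^ (c + (c + (n:ℝ)) - 1) = y ^ (c - 1) * y ^ (c + (n:ℝ)) := by
      rw [← Real.rpow_add hy0]; congr 1; ring
    have h2 : Real.exp (-((r + s) * y)) = Real.exp (-(s * y)) * Real.exp (-(r * y)) := by
      rw [← Real.exp_add]; congr 1; ring
    rw [hCndef, h1, h2]
    field_simp
  rw [setLIntegral_congr_fun measurableSet_Ioi hptw]
  simp_rw [ENNReal.ofReal_mul hCn.le]
  rw [lintegral_const_mul' _ _ ENNReal.ofReal_ne_top,
    show c + (c + (n:ℝ)) - 1 = (c + (c + n)) - 1 from rfl, lintegral_aux hA hR,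
    ← ENNReal.ofReal_mul hCn.le]
  congr 1
  -- scalar identity
  have h2c : c + (c + (n:ℝ)) = (k : ℝ) + n := by rw [hcdef]; ring
  have har : r = a * s := by rw [hrdef, hadef, hsdef]; field_simp
  have haR : r + s = (a + 1) * s := by rw [har]; ring
  have hss : s ^ c * s ^ (c + (n:ℝ)) = s ^ ((k:ℝ) + n) := by
    rw [← Real.rpow_add hs, ← h2c]
  have hnz1 : s ^ c ≠ 0 := (Real.rpow_pos_of_pos hs _).ne'
  have hnz2 : s ^ (c + (n:ℝ)) ≠ 0 := (Real.rpow_pos_of_pos hs _).ne'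
  have hnz3 : (a + 1) ^ ((k:ℝ) + (n:ℝ)) ≠ 0 := (Real.rpow_pos_of_pos ha1 _).ne'
  have hnz4 : ((a + 1) * s) ^ ((k:ℝ) + (n:ℝ)) ≠ 0 := (Real.rpow_pos_of_pos (by positivity) _).ne'
  clear_value a c r s Cn
  rw [hCndef, h2c, haR, har,
    Real.div_rpow zero_le_one (mul_nonneg ha1.le hs.le), Real.one_rpow,
    Real.mul_rpow ha1.le hs.le, Real.mul_rpow ha.le hs.le, ← hss]
  field_simp


end NaiveDWGCAux

open NaiveDWGCAux in
/-- The series representation of the probability that the window-level F-statistic of the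
naive DWGC method exceeds the threshold `1`:
`p(k) = 1 − ∑_{m=0}^∞ Γ(k+m) (1/ε₀)^{k/2+m} / ((1/ε₀+1)^{k+m} Γ(k/2) Γ(k/2+m+1))`,
and the series converges. -/

theorem naiveDWGCDetectProb_eq_one_sub_tsum (ε₀ : ℝ) (hε₀ : 1 < ε₀) (k : ℕ) (hk : 0 < k) :
    Summable (fun m : ℕ =>
      Real.Gamma ((k : ℝ) + m) * (1 / ε₀) ^ ((k : ℝ) / 2 + m) /
        ((1 / ε₀ + 1) ^ ((k : ℝ) + m) * Real.Gamma ((k : ℝ) / 2) *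
          Real.Gamma ((k : ℝ) / 2 + m + 1))) ∧
    naiveDWGCDetectProb ε₀ k =
      1 - ∑' m : ℕ,
        Real.Gamma ((k : ℝ) + m) * (1 / ε₀) ^ ((k : ℝ) / 2 + m) /
          ((1 / ε₀ + 1) ^ ((k : ℝ) + m) * Real.Gamma ((k : ℝ) / 2) *
            Real.Gamma ((k : ℝ) / 2 + m + 1)) := by
  have hε : (0:ℝ) < ε₀ := by linarith
  have hkR : (0:ℝ) < k := Nat.cast_pos.mpr hk
  have hc : (0:ℝ) < (k : ℝ) / 2 := by positivity
  have hr : (0:ℝ) < 1 / (2 * ε₀) := by positivity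
  have hs : (0:ℝ) < (1:ℝ) / 2 := by norm_num
  have hTnn : ∀ m : ℕ, 0 ≤ Real.Gamma ((k : ℝ) + m) * (1 / ε₀) ^ ((k : ℝ) / 2 + m) /
      ((1 / ε₀ + 1) ^ ((k : ℝ) + m) * Real.Gamma ((k : ℝ) / 2) *
        Real.Gamma ((k : ℝ) / 2 + m + 1)) := by
    intro m
    have h1 : 0 < Real.Gamma ((k:ℝ) + m) := Real.Gamma_pos_of_pos (by positivity)
    have h3 : 0 < Real.Gamma ((k:ℝ)/2 + m + 1) := Real.Gamma_pos_of_pos (by positivity)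
    have ha : (0:ℝ) < 1/ε₀ := by positivity
    have ha1 : (0:ℝ) < 1/ε₀ + 1 := by positivity
    exact div_nonneg (mul_nonneg h1.le (Real.rpow_pos_of_pos ha _).le)
      (mul_nonneg (mul_nonneg (Real.rpow_pos_of_pos ha1 _).le
        (Real.Gamma_pos_of_pos hc).le) h3.le)
  haveI := isProbabilityMeasure_gammaMeasure hc hr
  haveI := isProbabilityMeasure_gammaMeasure hc hs
  have hmeasLe : MeasurableSet {q : ℝ × ℝ | q.1 ≤ q.2} :=
    measurableSet_le measurable_fst measurable_snd
  have hE := key ε₀ hε₀ k hk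
  have hle : ((gammaMeasure ((k : ℝ) / 2) (1 / (2 * ε₀))).prod
      (gammaMeasure ((k : ℝ) / 2) (1 / 2))) {q : ℝ × ℝ | q.1 ≤ q.2} ≤ 1 := prob_le_one
  have hne : (∑' m : ℕ, ENNReal.ofReal
      (Real.Gamma ((k : ℝ) + m) * (1 / ε₀) ^ ((k : ℝ) / 2 + m) /
        ((1 / ε₀ + 1) ^ ((k : ℝ) + m) * Real.Gamma ((k : ℝ) / 2) *
          Real.Gamma ((k : ℝ) / 2 + m + 1)))) ≠ ⊤ := by
    rw [← hE]
    exact (lt_of_le_of_lt hle ENNReal.one_lt_top).ne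
  constructor
  · refine (ENNReal.summable_toReal hne).congr (fun m => ?_)
    exact ENNReal.toReal_ofReal (hTnn m)
  · rw [naiveDWGCDetectProb]
    have hset : {q : ℝ × ℝ | q.1 > q.2} = {q : ℝ × ℝ | q.1 ≤ q.2}ᶜ := by
      ext q; simp [not_le]
    rw [hset, measure_compl hmeasLe (measure_ne_top _ _), measure_univ, hE,
      ENNReal.toReal_sub_of_le (hE ▸ hle) ENNReal.one_ne_top, ENNReal.toReal_one]
    congr 1
    rw [ENNReal.tsum_toReal_eq (fun m => ENNReal.ofReal_ne_top)]
    exact tsum_congr fun m => ENNReal.toReal_ofReal (hTnn m)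
end

section
/- For all real numbers p > 0, q > 0 and every y with 0 < y < 1, the incomplete beta integral satisfies ∫₀^y t^{p−1}(1−t)^{q−1} dt = y^p (1−y)^q · ∑_{m=0}^∞ (Γ(p) Γ(p+q+m)) / (Γ(p+q) Γ(p+m+1)) · y^m, where Γ is the real Gamma function and the series converges. -/
open MeasureTheory Filter Real Topology

private noncomputable def betaC (p q : ℝ) (m : ℕ) : ℝ :=
  Real.Gamma p * Real.Gamma (p + q + m) / (Real.Gamma (p + q) * Real.Gamma (p + m + 1))

private lemma betaC_pos {p q : ℝ} (hp : 0 < p) (hq : 0 < q) (m : ℕ) : 0 < betaC p q m := by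
  have h1 : (0:ℝ) < p + q := by linarith
  have h2 : (0:ℝ) < p + q + m := by positivity
  have h3 : (0:ℝ) < p + m + 1 := by positivity
  exact div_pos (mul_pos (Real.Gamma_pos_of_pos hp) (Real.Gamma_pos_of_pos h2))
    (mul_pos (Real.Gamma_pos_of_pos h1) (Real.Gamma_pos_of_pos h3))

private lemma betaC_zero {p q : ℝ} (hp : 0 < p) (hq : 0 < q) : betaC p q 0 = 1 / p := by
  have h1 : (0:ℝ) < p + q := by linarith
  unfold betaC
  simp only [Nat.cast_zero, add_zero]
  rw [Real.Gamma_add_one hp.ne']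
  have hgp := (Real.Gamma_pos_of_pos hp).ne'
  have hgpq := (Real.Gamma_pos_of_pos h1).ne'
  field_simp

private lemma betaC_succ {p q : ℝ} (hp : 0 < p) (hq : 0 < q) (m : ℕ) :
    betaC p q (m + 1) * (p + m + 1) = betaC p q m * (p + q + m) := by
  have h2 : (0:ℝ) < p + q + m := by positivity
  have h3 : (0:ℝ) < p + m + 1 := by positivity
  unfold betaC
  push_cast
  rw [show p + q + ((m:ℝ) + 1) = (p + q + m) + 1 by ring, Real.Gamma_add_one h2.ne',
    show p + ((m:ℝ) + 1) + 1 = (p + m + 1) + 1 by ring, Real.Gamma_add_one h3.ne']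
  have hg3 := (Real.Gamma_pos_of_pos h3).ne'
  have hgpq := (Real.Gamma_pos_of_pos (show (0:ℝ) < p + q by linarith)).ne'
  field_simp

private lemma betaC_summable {p q y : ℝ} (hp : 0 < p) (hq : 0 < q)
    (hy₀ : 0 < y) (hy₁ : y < 1) :
    Summable (fun m : ℕ => betaC p q m * y ^ m) := by
  apply summable_of_ratio_norm_eventually_le (r := (1 + y) / 2) (by linarith)
  filter_upwards [eventually_ge_atTop ⌈2 * (p + q) / (1 - y)⌉₊] with n hn
  have hn' : 2 * (p + q) / (1 - y) ≤ (n : ℝ) := by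
    exact_mod_cast Nat.ceil_le.1 hn
  have h1y : (0:ℝ) < 1 - y := by linarith
  have hkey : 2 * (p + q) ≤ (1 - y) * n := by
    rw [div_le_iff₀ h1y] at hn'
    linarith [hn']
  have hA : 0 < betaC p q n := betaC_pos hp hq n
  have hB : 0 < betaC p q (n + 1) := betaC_pos hp hq (n + 1)
  have hrec := betaC_succ hp hq n
  have hpn1 : (0:ℝ) < p + n + 1 := by positivity
  have scalar : 2 * y * (p + q + n) ≤ (1 + y) * (p + n + 1) := by nlinarith
  have key : betaC p q (n + 1) * y ≤ (1 + y) / 2 * betaC p q n := by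
    nlinarith [mul_nonneg hA.le (sub_nonneg.2 scalar)]
  have hyn : (0:ℝ) ≤ y ^ n := pow_nonneg hy₀.le n
  rw [Real.norm_of_nonneg (by positivity), Real.norm_of_nonneg (by positivity), pow_succ]
  nlinarith [mul_le_mul_of_nonneg_right key hyn]

private lemma beta_integrable {a q y : ℝ} (ha : 0 < a) (hy₀ : 0 < y) (hy₁ : y < 1) :
    IntervalIntegrable (fun t => t ^ (a - 1) * (1 - t) ^ (q - 1)) volume 0 y := by
  apply IntervalIntegrable.mul_continuousOn
  · exact intervalIntegral.intervalIntegrable_rpow' (by linarith)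
  · apply ContinuousOn.rpow_const (continuous_const.sub continuous_id).continuousOn
    intro t ht
    rw [Set.uIcc_of_le hy₀.le] at ht
    left
    intro h
    simp only [Pi.sub_apply, id_eq] at h
    linarith [ht.2]

/-- Integration by parts step, multiplied through by `a`. -/
private lemma beta_step {a q y : ℝ} (ha : 0 < a) (hq : 0 < q) (hy₀ : 0 < y) (hy₁ : y < 1) :
    a * ∫ t in (0:ℝ)..y, t ^ (a - 1) * (1 - t) ^ (q - 1)
      = y ^ a * (1 - y) ^ q
        + (a + q) * ∫ t in (0:ℝ)..y, t ^ (a + 1 - 1) * (1 - t) ^ (q - 1) := by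
  have hint1 := beta_integrable (q := q) ha hy₀ hy₁
  have hint2 := beta_integrable (q := q) (a := a + 1) (by linarith) hy₀ hy₁
  set f' : ℝ → ℝ := fun t =>
    t ^ (a - 1) * (1 - t) ^ (q - 1) - ((a + q) / a) * (t ^ (a + 1 - 1) * (1 - t) ^ (q - 1))
    with hf'
  have key : ∫ t in (0:ℝ)..y, f' t
      = (fun t : ℝ => t ^ a * (1 - t) ^ q / a) y - (fun t : ℝ => t ^ a * (1 - t) ^ q / a) 0 := by
    apply intervalIntegral.integral_eq_sub_of_hasDeriv_right_of_le hy₀.le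
    · apply ContinuousOn.div_const
      apply ContinuousOn.mul
      · exact continuousOn_id.rpow_const (fun t _ => Or.inr ha.le)
      · exact ((continuous_const.sub continuous_id).continuousOn).rpow_const
          (fun t _ => Or.inr hq.le)
    · intro t ht
      have ht0 : 0 < t := ht.1
      have ht1 : 0 < 1 - t := by have := ht.2; nlinarith
      have h1 : HasDerivAt (fun t : ℝ => t ^ a) (a * t ^ (a - 1)) t :=
        Real.hasDerivAt_rpow_const (Or.inl ht0.ne')
      have h2 : HasDerivAt (fun t : ℝ => (1 - t) ^ q) (-1 * q * (1 - t) ^ (q - 1)) t := by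
        exact (HasDerivAt.const_sub 1 (hasDerivAt_id t)).rpow_const (Or.inl ht1.ne')
      have h3 := ((h1.mul h2).div_const a)
      refine (HasDerivWithinAt.congr_deriv (h3.hasDerivWithinAt) ?_)
      have e1 : (1 - t) ^ q = (1 - t) ^ (q - 1) * (1 - t) := by
        rw [← Real.rpow_add_one ht1.ne', sub_add_cancel]
      have e2 : t ^ (a + 1 - 1) = t ^ (a - 1) * t * 1 := by
        rw [mul_one, ← Real.rpow_add_one ht0.ne', sub_add_cancel, add_sub_cancel_right]
      have e3 : t ^ a = t ^ (a - 1) * t := by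
        rw [← Real.rpow_add_one ht0.ne', sub_add_cancel]
      rw [hf']
      simp only
      rw [e1, e2, e3]
      field_simp
      ring
    · exact hint1.sub (hint2.const_mul _)
  have hzero : (0:ℝ) ^ a = 0 := Real.zero_rpow ha.ne'
  rw [intervalIntegral.integral_sub hint1 (hint2.const_mul _),
    intervalIntegral.integral_const_mul] at key
  simp only [hzero, zero_mul, zero_div, sub_zero] at key
  have := congrArg (fun x => a * x) key
  field_simp at this ⊢
  linarith [this]

/-- Bound on the tail integral. -/
private lemma beta_int_bound {a q y : ℝ} (ha : 0 < a) (hq : 0 < q)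
    (hy₀ : 0 < y) (hy₁ : y < 1) :
    a * ∫ t in (0:ℝ)..y, t ^ (a - 1) * (1 - t) ^ (q - 1)
      ≤ max 1 ((1 - y) ^ (q - 1)) * y ^ a := by
  set M := max 1 ((1 - y) ^ (q - 1)) with hM
  have h1y : (0:ℝ) < 1 - y := by linarith
  have hM0 : (0:ℝ) ≤ M := le_trans zero_le_one (le_max_left _ _)
  have hbd : ∀ t ∈ Set.Icc (0:ℝ) y,
      t ^ (a - 1) * (1 - t) ^ (q - 1) ≤ M * t ^ (a - 1) := by
    intro t ht
    have ht0 : 0 ≤ t := ht.1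
    have ht1 : 0 < 1 - t := by have := ht.2; linarith
    have hb : (1 - t) ^ (q - 1) ≤ M := by
      rcases le_or_gt 1 q with hq1 | hq1
      · exact le_trans (Real.rpow_le_one ht1.le (by have := ht.1; linarith) (by linarith))
          (le_max_left _ _)
      · refine le_trans ?_ (le_max_right _ _)
        exact Real.rpow_le_rpow_of_nonpos h1y (by linarith [ht.2]) (by linarith)
    calc t ^ (a - 1) * (1 - t) ^ (q - 1) ≤ t ^ (a - 1) * M :=
          mul_le_mul_of_nonneg_left hb (Real.rpow_nonneg ht0 _)
      _ = M * t ^ (a - 1) := mul_comm _ _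
  have hmono := intervalIntegral.integral_mono_on hy₀.le
    (beta_integrable (q := q) ha hy₀ hy₁)
    ((intervalIntegral.intervalIntegrable_rpow' (by linarith : (-1:ℝ) < a - 1)).const_mul M) hbd
  rw [intervalIntegral.integral_const_mul,
    integral_rpow (Or.inl (by linarith : (-1:ℝ) < a - 1))] at hmono
  rw [sub_add_cancel, Real.zero_rpow ha.ne', sub_zero] at hmono
  calc a * ∫ t in (0:ℝ)..y, t ^ (a - 1) * (1 - t) ^ (q - 1)
      ≤ a * (M * (y ^ a / a)) := mul_le_mul_of_nonneg_left hmono ha.le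
    _ = M * y ^ a := by field_simp

/-- Series expansion of the (unregularized) incomplete beta function: for `p, q > 0` and
`0 < y < 1`,
`∫₀^y t^{p−1}(1−t)^{q−1} dt = y^p (1−y)^q ∑_{m=0}^∞ (Γ(p) Γ(p+q+m))/(Γ(p+q) Γ(p+m+1)) y^m`,
and the series converges. -/
theorem incompleteBeta_series (p q : ℝ) (hp : 0 < p) (hq : 0 < q)
    (y : ℝ) (hy₀ : 0 < y) (hy₁ : y < 1) :
    Summable (fun m : ℕ =>
      Real.Gamma p * Real.Gamma (p + q + m) /
        (Real.Gamma (p + q) * Real.Gamma (p + m + 1)) * y ^ m) ∧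
    ∫ t in (0 : ℝ)..y, t ^ (p - 1) * (1 - t) ^ (q - 1) =
      y ^ p * (1 - y) ^ q *
        ∑' m : ℕ, Real.Gamma p * Real.Gamma (p + q + m) /
          (Real.Gamma (p + q) * Real.Gamma (p + m + 1)) * y ^ m := by
  have hsum : Summable (fun m : ℕ => betaC p q m * y ^ m) := betaC_summable hp hq hy₀ hy₁
  have hrepr : (fun m : ℕ =>
      Real.Gamma p * Real.Gamma (p + q + m) /
        (Real.Gamma (p + q) * Real.Gamma (p + m + 1)) * y ^ m)
      = fun m : ℕ => betaC p q m * y ^ m := rfl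
  rw [hrepr]
  refine ⟨hsum, ?_⟩
  set R : ℕ → ℝ := fun N =>
    betaC p q N * ((p + N) * ∫ t in (0:ℝ)..y, t ^ (p + N - 1) * (1 - t) ^ (q - 1)) with hR
  -- partial sum decomposition
  have hpartial : ∀ N : ℕ,
      (∫ t in (0:ℝ)..y, t ^ (p - 1) * (1 - t) ^ (q - 1)) =
        y ^ p * (1 - y) ^ q * (∑ m ∈ Finset.range N, betaC p q m * y ^ m) + R N := by
    intro N
    induction N with
    | zero =>
        simp only [hR, Finset.range_zero, Finset.sum_empty, mul_zero, zero_add,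
          Nat.cast_zero, add_zero, betaC_zero hp hq]
        field_simp
    | succ N ih =>
        have hpn : (0:ℝ) < p + N := by positivity
        have hstep := beta_step (a := p + (N:ℝ)) hpn hq hy₀ hy₁
        have hrec := betaC_succ hp hq N
        have hyN : y ^ (p + (N:ℝ)) = y ^ p * y ^ N := by
          rw [Real.rpow_add hy₀, Real.rpow_natCast]
        rw [hyN] at hstep
        rw [ih, Finset.sum_range_succ, hR]
        simp only [Nat.cast_succ]
        rw [show p + ((N:ℝ) + 1) - 1 = p + (N:ℝ) + 1 - 1 by ring,
          show p + ((N:ℝ) + 1) = p + (N:ℝ) + 1 by ring]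
        set J := ∫ t in (0:ℝ)..y, t ^ (p + (N:ℝ) + 1 - 1) * (1 - t) ^ (q - 1)
        linear_combination (betaC p q N) * hstep - J * hrec
  -- remainder tends to zero
  set M := max 1 ((1 - y) ^ (q - 1)) with hM
  have hM0 : (0:ℝ) ≤ M := le_trans zero_le_one (le_max_left _ _)
  have hRnn : ∀ N, 0 ≤ R N := by
    intro N
    have hpn : (0:ℝ) < p + N := by positivity
    refine mul_nonneg (betaC_pos hp hq N).le (mul_nonneg hpn.le ?_)
    apply intervalIntegral.integral_nonneg hy₀.le
    intro t ht
    exact mul_nonneg (Real.rpow_nonneg ht.1 _)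
      (Real.rpow_nonneg (by have := ht.2; linarith) _)
  have hRle : ∀ N, R N ≤ (M * y ^ p) * (betaC p q N * y ^ N) := by
    intro N
    have hpn : (0:ℝ) < p + N := by positivity
    have hb := beta_int_bound (a := p + (N:ℝ)) hpn hq hy₀ hy₁
    have hyN : y ^ (p + (N:ℝ)) = y ^ p * y ^ N := by
      rw [Real.rpow_add hy₀, Real.rpow_natCast]
    rw [hyN] at hb
    calc R N ≤ betaC p q N * (M * (y ^ p * y ^ N)) :=
          mul_le_mul_of_nonneg_left hb (betaC_pos hp hq N).le
      _ = (M * y ^ p) * (betaC p q N * y ^ N) := by ring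
  have hg : Tendsto (fun N : ℕ => (M * y ^ p) * (betaC p q N * y ^ N)) atTop (𝓝 0) := by
    simpa using (hsum.tendsto_atTop_zero).const_mul (M * y ^ p)
  have hR0 : Tendsto R atTop (𝓝 0) := squeeze_zero hRnn hRle hg
  have hS : Tendsto (fun N : ℕ => ∑ m ∈ Finset.range N, betaC p q m * y ^ m) atTop
      (𝓝 (∑' m : ℕ, betaC p q m * y ^ m)) := hsum.hasSum.tendsto_sum_nat
  have h1 : Tendsto (fun N : ℕ =>
      y ^ p * (1 - y) ^ q * (∑ m ∈ Finset.range N, betaC p q m * y ^ m) + R N) atTop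
      (𝓝 (y ^ p * (1 - y) ^ q * (∑' m : ℕ, betaC p q m * y ^ m))) := by
    simpa using (hS.const_mul (y ^ p * (1 - y) ^ q)).add hR0
  have h2 : (fun N : ℕ =>
      y ^ p * (1 - y) ^ q * (∑ m ∈ Finset.range N, betaC p q m * y ^ m) + R N)
      = fun _ => ∫ t in (0:ℝ)..y, t ^ (p - 1) * (1 - t) ^ (q - 1) :=
    funext fun N => (hpartial N).symm
  rw [h2] at h1
  exact tendsto_nhds_unique tendsto_const_nhds h1
end
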